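/- arXiv:1509.04354 — 3 statements merged into one kernel-verified Lean document; each statement's English description precedes it below -/
import Mathlib

section
/- Let p be prime, χ a nontrivial multiplicative character of 𝔽_p (extended by χ(0)=0), and A, B, C ⊆ 𝔽_p finite sets. Then |∑_{a∈A} ∑_{b∈B} ∑_{c∈C} χ(a+b+c)| ≤ √(p · |A| · E₊(B,C)). -/
open Finset
open scoped Combinatorics.Additive

section Aux

variable {p : ℕ} [Fact p.Prime]

private lemma chi_mul_inv_self (χ : MulChar (ZMod p) ℂ) {t : ZMod p} (ht : t ≠ 0) :
    χ t * χ⁻¹ t = 1 := by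
  rw [MulChar.inv_apply', ← map_mul, mul_inv_cancel₀ ht, χ.map_one]

private lemma shifted_sum_eq (χ : MulChar (ZMod p) ℂ) (hχ : χ ≠ 1) (d : ZMod p) :
    ∑ x : ZMod p, χ (x + d) * χ⁻¹ x =
      if d = 0 then (p : ℂ) - 1 else -1 := by
  have h2 : (1 : ℕ) < p := (Fact.out : p.Prime).one_lt
  have h0 : (χ⁻¹) (0 : ZMod p) = 0 := MulChar.map_nonunit _ not_isUnit_zero
  have herase : ∑ x : ZMod p, χ (x + d) * χ⁻¹ x
      = ∑ x ∈ (univ : Finset (ZMod p)).erase 0, χ (x + d) * χ⁻¹ x := by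
    rw [Finset.sum_erase _ (by rw [h0, mul_zero])]
  split_ifs with hd
  · subst hd
    rw [herase]
    have : ∀ x ∈ (univ : Finset (ZMod p)).erase 0, χ (x + 0) * χ⁻¹ x = 1 := by
      intro x hx
      rw [add_zero]
      exact chi_mul_inv_self χ (Finset.ne_of_mem_erase hx)
    rw [Finset.sum_congr rfl this, Finset.sum_const, nsmul_eq_mul, mul_one,
      Finset.card_erase_of_mem (Finset.mem_univ _), Finset.card_univ, ZMod.card]
    push_cast [Nat.cast_sub h2.le]
    ring
  · rw [herase]
    have key : ∀ x ∈ (univ : Finset (ZMod p)).erase 0,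
        χ (x + d) * χ⁻¹ x = χ (1 + d * x⁻¹) := by
      intro x hx
      have hx0 : x ≠ 0 := Finset.ne_of_mem_erase hx
      rw [MulChar.inv_apply', ← map_mul]
      congr 1
      field_simp
    rw [Finset.sum_congr rfl key]
    have hbij : ∑ x ∈ (univ : Finset (ZMod p)).erase 0, χ (1 + d * x⁻¹)
        = ∑ t ∈ (univ : Finset (ZMod p)).erase 1, χ t := by
      refine Finset.sum_nbij' (fun x => 1 + d * x⁻¹) (fun t => d * (t - 1)⁻¹) ?_ ?_ ?_ ?_ ?_
      · intro x hx
        have hx0 : x ≠ 0 := Finset.ne_of_mem_erase hx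
        refine Finset.mem_erase.2 ⟨?_, Finset.mem_univ _⟩
        intro h
        have : d * x⁻¹ = 0 := by linear_combination h
        rcases mul_eq_zero.1 this with h' | h'
        · exact hd h'
        · exact hx0 (inv_eq_zero.1 h')
      · intro t ht
        have ht1 : t ≠ 1 := Finset.ne_of_mem_erase ht
        refine Finset.mem_erase.2 ⟨?_, Finset.mem_univ _⟩
        intro h
        rcases mul_eq_zero.1 h with h' | h'
        · exact hd h'
        · exact ht1 (by
            have := inv_eq_zero.1 h'
            have : t = 1 := by linear_combination this
            exact this)
      · intro x hx
        have hx0 : x ≠ 0 := Finset.ne_of_mem_erase hx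
        field_simp
        simp [hd]
      · intro t ht
        have ht1 : t ≠ 1 := Finset.ne_of_mem_erase ht
        have h1 : t - 1 ≠ 0 := sub_ne_zero.2 ht1
        field_simp
        ring
      · intro x hx
        rfl
    rw [hbij, Finset.sum_erase_eq_sub (Finset.mem_univ _),
      MulChar.sum_eq_zero_of_ne_one hχ, χ.map_one]
    ring

private lemma second_moment (χ : MulChar (ZMod p) ℂ) (hχ : χ ≠ 1) (A : Finset (ZMod p)) :
    ∑ x : ZMod p, Complex.normSq (∑ a ∈ A, χ (a + x)) ≤ (p : ℝ) * A.card := by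
  classical
  set T : ZMod p → ℂ := fun x => ∑ a ∈ A, χ (a + x) with hT
  have key : ((∑ x : ZMod p, Complex.normSq (T x) : ℝ) : ℂ)
      = (A.card : ℂ) * ((p : ℂ) - A.card) := by
    push_cast
    calc (∑ x : ZMod p, (Complex.normSq (T x) : ℂ))
        = ∑ x : ZMod p, T x * (starRingEnd ℂ) (T x) := by
          refine Finset.sum_congr rfl fun x _ => ?_
          rw [Complex.mul_conj]
      _ = ∑ x : ZMod p, ∑ a ∈ A, ∑ a' ∈ A, χ (a + x) * χ⁻¹ (a' + x) := by
          refine Finset.sum_congr rfl fun x _ => ?_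
          rw [hT]
          rw [map_sum, Finset.sum_mul_sum]
          refine Finset.sum_congr rfl fun a _ => Finset.sum_congr rfl fun a' _ => ?_
          rw [starRingEnd_apply, MulChar.star_apply']
      _ = ∑ a ∈ A, ∑ a' ∈ A, ∑ x : ZMod p, χ (a + x) * χ⁻¹ (a' + x) := by
          rw [Finset.sum_comm]
          exact Finset.sum_congr rfl fun a _ => Finset.sum_comm
      _ = ∑ a ∈ A, ∑ a' ∈ A, (if a - a' = 0 then (p : ℂ) - 1 else -1) := by
          refine Finset.sum_congr rfl fun a _ => Finset.sum_congr rfl fun a' _ => ?_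
          rw [← shifted_sum_eq χ hχ (a - a')]
          refine Fintype.sum_equiv (Equiv.addRight a') _ _ fun x => ?_
          simp only [Equiv.coe_addRight]
          congr 1 <;> ring_nf
      _ = ∑ a ∈ A, (((p : ℂ) - 1) + (A.card - 1) * (-1)) := by
          refine Finset.sum_congr rfl fun a ha => ?_
          rw [← Finset.add_sum_erase _ _ ha]
          simp only [sub_self, if_pos rfl]
          congr 1
          have : ∀ a' ∈ A.erase a, (if a - a' = 0 then (p : ℂ) - 1 else -1) = -1 := by
            intro a' ha'
            rw [if_neg (sub_ne_zero.2 (Finset.ne_of_mem_erase ha').symm)]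
          rw [Finset.sum_congr rfl this, Finset.sum_const,
            Finset.card_erase_of_mem ha, nsmul_eq_mul]
          push_cast [Nat.cast_sub (Finset.card_pos.2 ⟨a, ha⟩)]
          ring
      _ = (A.card : ℂ) * ((p : ℂ) - A.card) := by
          rw [Finset.sum_const, nsmul_eq_mul]
          ring
  have hre : (∑ x : ZMod p, Complex.normSq (T x) : ℝ)
      = (A.card : ℝ) * ((p : ℝ) - A.card) := by
    have := key
    rw [show (A.card : ℂ) * ((p : ℂ) - A.card)
        = (((A.card : ℝ) * ((p : ℝ) - A.card) : ℝ) : ℂ) by push_cast; ring] at this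
    exact_mod_cast this
  rw [hre]
  nlinarith [Nat.cast_nonneg (α := ℝ) A.card, sq_nonneg ((A.card : ℝ))]

end Aux

theorem ternary_char_sum_bound (p : ℕ) [Fact p.Prime]
    (χ : MulChar (ZMod p) ℂ) (hχ : χ ≠ 1)
    (A B C : Finset (ZMod p)) :
    ‖∑ a ∈ A, ∑ b ∈ B, ∑ c ∈ C, χ (a + b + c)‖ ≤
      Real.sqrt (p * A.card * E[B, C]) := by
  classical
  set T : ZMod p → ℂ := fun x => ∑ a ∈ A, χ (a + x) with hT
  set r : ZMod p → ℕ := fun x => ((B ×ˢ C).filter fun q => q.1 + q.2 = x).card with hr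
  have hsum : (∑ a ∈ A, ∑ b ∈ B, ∑ c ∈ C, χ (a + b + c))
      = ∑ x : ZMod p, (r x : ℂ) * T x := by
    have h1 : (∑ a ∈ A, ∑ b ∈ B, ∑ c ∈ C, χ (a + b + c))
        = ∑ q ∈ B ×ˢ C, T (q.1 + q.2) := by
      rw [Finset.sum_product]
      rw [Finset.sum_comm]
      refine Finset.sum_congr rfl fun b _ => ?_
      rw [Finset.sum_comm]
      refine Finset.sum_congr rfl fun c _ => ?_
      rw [hT]
      refine Finset.sum_congr rfl fun a _ => ?_
      ring_nf
    rw [h1, ← Finset.sum_fiberwise_of_maps_to (g := fun q : ZMod p × ZMod p => q.1 + q.2)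
      (fun q _ => Finset.mem_univ (q.1 + q.2))]
    refine Finset.sum_congr rfl fun x _ => ?_
    rw [Finset.sum_congr rfl (fun q hq => by
      rw [(Finset.mem_filter.1 hq).2]), Finset.sum_const, nsmul_eq_mul, hr]
  rw [hsum]
  calc ‖∑ x : ZMod p, (r x : ℂ) * T x‖
      ≤ ∑ x : ZMod p, (r x : ℝ) * ‖T x‖ := by
        refine (norm_sum_le univ fun x => ((r x : ℂ) * T x)).trans_eq ?_
        refine Finset.sum_congr rfl fun x _ => ?_
        rw [norm_mul]
        simp
    _ ≤ Real.sqrt (∑ x : ZMod p, (r x : ℝ) ^ 2) *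
          Real.sqrt (∑ x : ZMod p, ‖T x‖ ^ 2) :=
        Real.sum_mul_le_sqrt_mul_sqrt univ (fun x => (r x : ℝ)) (fun x => ‖T x‖)
    _ ≤ Real.sqrt (E[B, C]) * Real.sqrt ((p : ℝ) * A.card) := by
        gcongr
        · rw [Finset.addEnergy_eq_sum_sq]
          push_cast
          rfl
        · refine le_trans (le_of_eq ?_) (second_moment χ hχ A)
          refine Finset.sum_congr rfl fun x _ => ?_
          rw [← Complex.sq_norm]
    _ = Real.sqrt (p * A.card * E[B, C]) := by
        rw [← Real.sqrt_mul (by positivity)]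
        ring_nf
end

section
/- Let p be prime, χ a nontrivial multiplicative character of 𝔽_p, and A, B ⊆ 𝔽_p. Then |∑_{a∈A} ∑_{b∈B} χ(a+b)| ≤ √(p·|A|·|B|). -/
open Finset

lemma mulchar_inv_mul_self {p : ℕ} [Fact p.Prime] (χ : MulChar (ZMod p) ℂ)
    {a : ZMod p} (ha : a ≠ 0) : (χ a)⁻¹ * χ a = 1 := by
  have h : (χ⁻¹ * χ) a = 1 := by
    rw [MulChar.inv_mul]
    exact MulChar.one_apply (isUnit_iff_ne_zero.mpr ha)
  rwa [MulChar.coeToFun_mul, Pi.mul_apply, MulChar.inv_apply_eq_inv'] at h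

lemma conj_mulchar {p : ℕ} [Fact p.Prime] (χ : MulChar (ZMod p) ℂ) (a : ZMod p) :
    (starRingEnd ℂ) (χ a) = χ⁻¹ a := MulChar.star_apply' χ a

lemma key_shift {p : ℕ} [Fact p.Prime] (χ : MulChar (ZMod p) ℂ) (hχ : χ ≠ 1)
    {c : ZMod p} (hc : c ≠ 0) :
    ∑ x : ZMod p, χ x * (starRingEnd ℂ) (χ (x + c)) = -1 := by
  have hb : Function.Bijective (fun t : ZMod p => -c * t) :=
    mulLeft_bijective₀ (-c) (neg_ne_zero.mpr hc)
  calc ∑ x : ZMod p, χ x * (starRingEnd ℂ) (χ (x + c))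
      = ∑ t : ZMod p, χ (-c * t) * χ⁻¹ (c * (1 - t)) := by
        refine (Fintype.sum_bijective _ hb _ _ fun t => ?_).symm
        rw [conj_mulchar]
        ring_nf
    _ = ∑ t : ZMod p, (χ (-1) * (χ c * (χ c)⁻¹)) * (χ t * χ⁻¹ (1 - t)) := by
        refine Finset.sum_congr rfl fun t _ => ?_
        rw [show (-c : ZMod p) * t = (-1) * c * t by ring, map_mul, map_mul,
          map_mul, MulChar.inv_apply_eq_inv']
        ring
    _ = χ (-1) * jacobiSum χ χ⁻¹ := by
        rw [mul_comm (χ c), mulchar_inv_mul_self χ hc, mul_one, ← Finset.mul_sum]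
        rfl
    _ = -1 := by
        rw [jacobiSum_nontrivial_inv hχ, mul_neg, ← map_mul,
          show ((-1 : ZMod p) * -1) = 1 by ring, χ.map_one]

lemma key_diag {p : ℕ} [Fact p.Prime] (χ : MulChar (ZMod p) ℂ) :
    ∑ x : ZMod p, χ x * (starRingEnd ℂ) (χ x) = (p : ℂ) - 1 := by
  have h : ∀ x : ZMod p, χ x * (starRingEnd ℂ) (χ x) = if x = 0 then 0 else 1 := by
    intro x
    by_cases hx : x = 0
    · simp [hx, χ.map_zero]
    · rw [conj_mulchar, MulChar.inv_apply_eq_inv', mul_comm,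
        mulchar_inv_mul_self χ hx, if_neg hx]
  simp only [h]
  have h2 : ∀ x : ZMod p, (if x = 0 then (0:ℂ) else 1) = 1 - (if x = 0 then 1 else 0) := by
    intro x; split <;> ring
  simp only [h2, Finset.sum_sub_distrib, Finset.sum_const, Finset.sum_ite_eq',
    Finset.mem_univ, if_pos, smul_eq_mul, mul_one, Finset.card_univ, ZMod.card,
    nsmul_eq_mul]

theorem paley_sum_bound (p : ℕ) [Fact p.Prime]
    (χ : MulChar (ZMod p) ℂ) (hχ : χ ≠ 1)
    (A B : Finset (ZMod p)) :
    ‖∑ a ∈ A, ∑ b ∈ B, χ (a + b)‖ ≤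
      Real.sqrt (p * A.card * B.card) := by
  set f : ZMod p → ℂ := fun a => ∑ b ∈ B, χ (a + b) with hf
  -- the complex second moment over all of ZMod p
  have inner : ∀ b b' : ZMod p, ∑ a : ZMod p, χ (a + b) * (starRingEnd ℂ) (χ (a + b'))
      = if b = b' then (p : ℂ) - 1 else -1 := by
    intro b b'
    have sub : ∑ a : ZMod p, χ (a + b) * (starRingEnd ℂ) (χ (a + b'))
        = ∑ x : ZMod p, χ x * (starRingEnd ℂ) (χ (x + (b' - b))) := by
      refine (Fintype.sum_bijective (fun x : ZMod p => x - b)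
        (Function.bijective_iff_has_inverse.mpr ⟨fun x => x + b, fun x => by ring,
          fun x => by ring⟩) _ _ fun x => ?_).symm
      ring_nf
    rw [sub]
    by_cases hbb : b = b'
    · rw [if_pos hbb, hbb, sub_self]
      simpa using key_diag χ
    · rw [if_neg hbb]
      exact key_shift χ hχ (sub_ne_zero_of_ne (Ne.symm hbb))
  have hC : ∑ a : ZMod p, f a * (starRingEnd ℂ) (f a)
      = (B.card : ℂ) * (p : ℂ) - (B.card : ℂ) ^ 2 := by
    have expand : ∑ a : ZMod p, f a * (starRingEnd ℂ) (f a)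
        = ∑ b ∈ B, ∑ b' ∈ B, ∑ a : ZMod p, χ (a + b) * (starRingEnd ℂ) (χ (a + b')) := by
      simp only [hf, map_sum, Finset.sum_mul_sum]
      rw [Finset.sum_comm]
      exact Finset.sum_congr rfl fun b _ => Finset.sum_comm
    rw [expand]
    simp only [inner]
    have split : ∀ b b' : ZMod p, (if b = b' then (p : ℂ) - 1 else -1)
        = -1 + (if b = b' then (p : ℂ) else 0) := by
      intro b b'; split <;> ring
    simp only [split, Finset.sum_add_distrib, Finset.sum_const, Finset.sum_ite_eq,
      smul_eq_mul, nsmul_eq_mul]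
    rw [Finset.sum_congr rfl fun b hb => if_pos hb, Finset.sum_const, nsmul_eq_mul]
    ring
  -- real second moment
  have hT : ∑ a : ZMod p, ‖f a‖ ^ 2 ≤ (p : ℝ) * B.card := by
    have h1 : ((∑ a : ZMod p, ‖f a‖ ^ 2 : ℝ) : ℂ)
        = ∑ a : ZMod p, f a * (starRingEnd ℂ) (f a) := by
      rw [Complex.ofReal_sum]
      refine Finset.sum_congr rfl fun a _ => ?_
      rw [Complex.mul_conj]
      norm_cast
      exact Complex.sq_norm _
    rw [hC] at h1
    have h2 : ∑ a : ZMod p, ‖f a‖ ^ 2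
        = (B.card : ℝ) * (p : ℝ) - (B.card : ℝ) ^ 2 := by
      rw [show ((B.card:ℂ) * (p:ℂ) - (B.card:ℂ)^2)
          = (((B.card : ℝ) * (p : ℝ) - (B.card : ℝ)^2 : ℝ) : ℂ) by push_cast; ring] at h1
      exact_mod_cast h1
    rw [h2]
    nlinarith [sq_nonneg ((B.card : ℝ))]
  -- Cauchy-Schwarz
  have step1 : ‖∑ a ∈ A, f a‖ ≤ ∑ a ∈ A, ‖f a‖ :=
    norm_sum_le A f
  have step2 : (∑ a ∈ A, ‖f a‖) ^ 2
      ≤ (A.card : ℝ) * ∑ a ∈ A, ‖f a‖ ^ 2 := by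
    simpa using sq_sum_le_card_mul_sum_sq (s := A) (f := fun a => ‖f a‖)
  have step3 : ∑ a ∈ A, ‖f a‖ ^ 2 ≤ ∑ a : ZMod p, ‖f a‖ ^ 2 :=
    Finset.sum_le_sum_of_subset_of_nonneg (Finset.subset_univ A)
      (fun i _ _ => by positivity)
  have hX : (∑ a ∈ A, ‖f a‖) ^ 2 ≤ (p : ℝ) * A.card * B.card := by
    calc (∑ a ∈ A, ‖f a‖) ^ 2
        ≤ (A.card : ℝ) * ∑ a ∈ A, ‖f a‖ ^ 2 := step2
      _ ≤ (A.card : ℝ) * ((p : ℝ) * B.card) := by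
          refine mul_le_mul_of_nonneg_left (step3.trans hT) (by positivity)
      _ = (p : ℝ) * A.card * B.card := by ring
  refine step1.trans ?_
  rw [Real.le_sqrt (by positivity) (by positivity)]
  exact hX
end

section
/- Let p be prime and A, B ⊆ 𝔽_p each of size at least 2 such that every element of the sumset A + B is a nonzero quadratic residue mod p. Then |A|·|B| ≤ p. -/
open Finset

lemma quadChar_shift_sum (p : ℕ) [Fact p.Prime] (hp : p ≠ 2) (c : ZMod p) (hc : c ≠ 0) :
    ∑ x : ZMod p, quadraticChar (ZMod p) x * quadraticChar (ZMod p) (x + c) = -1 := by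
  classical
  have hchar : ringChar (ZMod p) ≠ 2 := by
    rw [ZMod.ringChar_zmod_n]; exact hp
  set χ := quadraticChar (ZMod p) with hχ
  have h1 : ∑ x : ZMod p, χ x * χ (x + c)
      = ∑ x ∈ (univ : Finset (ZMod p)).erase 0, χ x * χ (x + c) := by
    rw [Finset.sum_erase_eq_sub (mem_univ 0)]
    simp [hχ, quadraticChar_zero]
  have h2 : ∀ x ∈ (univ : Finset (ZMod p)).erase 0,
      χ x * χ (x + c) = χ (1 + c * x⁻¹) := by
    intro x hx
    have hx0 : x ≠ 0 := (Finset.mem_erase.mp hx).1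
    have : x + c = x * (1 + c * x⁻¹) := by
      field_simp
    rw [this, map_mul, ← mul_assoc, ← sq, quadraticChar_sq_one hx0, one_mul]
  rw [h1, Finset.sum_congr rfl h2]
  have h3 : ∑ x ∈ (univ : Finset (ZMod p)).erase 0, χ (1 + c * x⁻¹)
      = ∑ y ∈ (univ : Finset (ZMod p)).erase 1, χ y := by
    apply Finset.sum_nbij' (fun x => 1 + c * x⁻¹) (fun y => c * (y - 1)⁻¹)
    · intro x hx
      have hx0 : x ≠ 0 := (Finset.mem_erase.mp hx).1
      refine Finset.mem_erase.mpr ⟨?_, mem_univ _⟩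
      intro hcontra
      have : c * x⁻¹ = 0 := by linear_combination hcontra
      rcases mul_eq_zero.mp this with h' | h'
      · exact hc h'
      · exact hx0 (inv_eq_zero.mp h')
    · intro y hy
      have hy1 : y ≠ 1 := (Finset.mem_erase.mp hy).1
      refine Finset.mem_erase.mpr ⟨?_, mem_univ _⟩
      intro hcontra
      rcases mul_eq_zero.mp hcontra with h' | h'
      · exact hc h'
      · exact hy1 (by have := inv_eq_zero.mp h'; linear_combination this)
    · intro x hx
      have hx0 : x ≠ 0 := (Finset.mem_erase.mp hx).1
      field_simp
      simp [hc]
    · intro y hy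
      have hy1 : y ≠ 1 := (Finset.mem_erase.mp hy).1
      have : y - 1 ≠ 0 := sub_ne_zero.mpr hy1
      field_simp
      ring
    · intros; rfl
  rw [h3, Finset.sum_erase_eq_sub (mem_univ 1), quadraticChar_sum_zero hchar]
  simp

lemma quadChar_sq_shift_sum (p : ℕ) [Fact p.Prime] (b : ZMod p) :
    ∑ x : ZMod p, quadraticChar (ZMod p) (x + b) ^ 2 = (p : ℤ) - 1 := by
  classical
  set χ := quadraticChar (ZMod p) with hχ
  have h0 : ∑ x : ZMod p, χ (x + b) ^ 2 = ∑ x : ZMod p, χ x ^ 2 :=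
    Fintype.sum_equiv (Equiv.addRight b) _ _ (fun x => rfl)
  rw [h0, Finset.sum_eq_sum_sdiff_singleton_add (mem_univ (0 : ZMod p))]
  have h1 : ∀ x ∈ (univ : Finset (ZMod p)) \ {0}, χ x ^ 2 = 1 := by
    intro x hx
    exact quadraticChar_sq_one (by simpa using (Finset.mem_sdiff.mp hx).2)
  rw [Finset.sum_congr rfl h1, Finset.sum_const, Finset.card_sdiff_of_subset (by simp)]
  have hp1 : 1 ≤ p := (Fact.out : p.Prime).pos
  simp [ZMod.card, hχ, quadraticChar_zero]
  push_cast [Nat.cast_sub hp1]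
  ring

theorem sarkozy_sumset_bound (p : ℕ) [Fact p.Prime]
    (A B : Finset (ZMod p)) (hA : 2 ≤ A.card) (hB : 2 ≤ B.card)
    (h : ∀ a ∈ A, ∀ b ∈ B, a + b ≠ 0 ∧ IsSquare (a + b)) :
    A.card * B.card ≤ p := by
  classical
  by_cases hp2 : p = 2
  · -- p = 2 : contradiction
    subst hp2
    have hAu : A = univ := Finset.eq_univ_of_card A (le_antisymm (by simpa using A.card_le_univ) (by simpa using hA))
    have hBu : B = univ := Finset.eq_univ_of_card B (le_antisymm (by simpa using B.card_le_univ) (by simpa using hB))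
    have := (h 0 (by simp [hAu]) 0 (by simp [hBu])).1
    simp at this
  · set χ := quadraticChar (ZMod p) with hχ
    have hchi1 : ∀ a ∈ A, ∀ b ∈ B, χ (a + b) = 1 := by
      intro a ha b hb
      exact (quadraticChar_one_iff_isSquare (h a ha b hb).1).mpr (h a ha b hb).2
    set f : ZMod p → ℤ := fun x => ∑ b ∈ B, χ (x + b) with hf
    have hS : ∑ a ∈ A, f a = (A.card : ℤ) * B.card := by
      rw [Finset.sum_congr rfl (fun a ha => Finset.sum_congr rfl (fun b hb => hchi1 a ha b hb))]
      simp [mul_comm]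
    -- Cauchy--Schwarz
    have hCS : ((A.card : ℤ) * B.card) ^ 2 ≤ (A.card : ℤ) * ∑ a ∈ A, f a ^ 2 := by
      rw [← hS]; exact sq_sum_le_card_mul_sum_sq
    have hmono : ∑ a ∈ A, f a ^ 2 ≤ ∑ x : ZMod p, f x ^ 2 :=
      Finset.sum_le_sum_of_subset_of_nonneg (Finset.subset_univ A) (fun x _ _ => sq_nonneg _)
    -- compute the full sum
    have hfull : ∑ x : ZMod p, f x ^ 2 = (B.card : ℤ) * p - (B.card : ℤ) ^ 2 := by
      have expand : ∀ x : ZMod p, f x ^ 2 = ∑ b ∈ B, ∑ b' ∈ B, χ (x + b) * χ (x + b') := by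
        intro x; rw [hf, sq, Finset.sum_mul_sum]
      rw [Finset.sum_congr rfl (fun x _ => expand x), Finset.sum_comm]
      have inner : ∀ b ∈ B, ∑ b' ∈ B, ∑ x : ZMod p, χ (x + b) * χ (x + b')
          = (p : ℤ) - B.card := by
        intro b hb
        have step : ∀ b' ∈ B, ∑ x : ZMod p, χ (x + b) * χ (x + b')
            = if b' = b then (p : ℤ) - 1 else -1 := by
          intro b' hb'
          by_cases hbb : b' = b
          · subst hbb
            simp only [if_pos rfl]
            rw [← quadChar_sq_shift_sum p b']
            exact Finset.sum_congr rfl (fun x _ => (sq _).symm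
              )
          · rw [if_neg hbb]
            have hc : b' - b ≠ 0 := sub_ne_zero.mpr hbb
            have := quadChar_shift_sum p hp2 (b' - b) hc
            rw [← this]
            apply Fintype.sum_equiv (Equiv.addRight b)
            intro x
            simp only [Equiv.coe_addRight]
            ring_nf
            rw [hχ]
        rw [Finset.sum_congr rfl step, Finset.sum_ite, Finset.sum_const, Finset.sum_const,
          Finset.filter_eq', if_pos hb, Finset.filter_ne', Finset.card_erase_of_mem hb]
        have hB1 : 1 ≤ B.card := le_trans (by norm_num) hB
        simp
        omega
      rw [Finset.sum_congr rfl (fun b _ => Finset.sum_comm),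
        Finset.sum_congr rfl inner, Finset.sum_const, nsmul_eq_mul]
      ring
    -- conclude
    have hfin : (A.card : ℤ) * B.card ≤ (p : ℤ) := by
      have h2a : (2:ℤ) ≤ A.card := by exact_mod_cast hA
      have h2b : (2:ℤ) ≤ B.card := by exact_mod_cast hB
      have key : ((A.card : ℤ) * B.card) ^ 2 ≤ (A.card : ℤ) * ((B.card : ℤ) * p - (B.card : ℤ)^2) := by
        calc ((A.card : ℤ) * B.card) ^ 2 ≤ (A.card : ℤ) * ∑ a ∈ A, f a ^ 2 := hCS
        _ ≤ (A.card : ℤ) * ∑ x : ZMod p, f x ^ 2 := by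
            apply mul_le_mul_of_nonneg_left hmono (by positivity)
        _ = (A.card : ℤ) * ((B.card : ℤ) * p - (B.card : ℤ)^2) := by rw [hfull]
      nlinarith [sq_nonneg ((B.card : ℤ))]
    exact_mod_cast hfin
end
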